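/- Let s ∈ ℂ with Re(s) = a > 0. Let Ω ⊆ ℝ³ be a measurable set, let ρ : Ω → ℝ be measurable with ρ(x) > 0 for all x, and for η = 1,2,3 let d_η : ℝ → ℝ be measurable with d_η ≥ 0; set S_η(x) = 1 + d_η(x_η)/s. Let g : Ω → ℂ³ be measurable such that for each η the function x ↦ (1/ρ(x)) |g_η(x)/S_η(x)|² is integrable on Ω. Then for each η the function x ↦ Re( conj(s)/(ρ(x) S_η(x)²) ) |g_η(x)|² is integrable, and 2 Σ_{η=1}^{3} ∫_Ω Re( conj(s)/(ρ(x) S_η(x)²) ) |g_η(x)|² dx ≥ a Σ_{η=1}^{3} ∫_Ω (1/ρ(x)) |g_η(x)/S_η(x)|² dx. -/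

import Mathlib

open MeasureTheory

lemma pml_core (s : ℂ) (hs : 0 < s.re) (d : ℝ) (hd : 0 ≤ d) :
    s.re ≤ 2 * ((starRingEnd ℂ) s / (1 + (d:ℂ)/s)^2).re * (‖1 + (d:ℂ)/s‖)^2 := by
  have hs0 : s ≠ 0 := fun h => by simp [h] at hs
  have hw : s + (d:ℂ) ≠ 0 := by
    intro h
    have : (s + (d:ℂ)).re = 0 := by rw [h]; simp
    simp [Complex.add_re] at this
    linarith
  have e1 : (1:ℂ) + (d:ℂ)/s = (s + d)/s := by field_simp
  have hc : (starRingEnd ℂ) s * s = (Complex.normSq s : ℂ) := by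
    rw [mul_comm, Complex.mul_conj]
  have e2 : (starRingEnd ℂ) s / ((s + (d:ℂ))/s)^2
      = (Complex.normSq s : ℂ) * (s / (s + d)^2) := by
    field_simp
    rw [← hc]
  have e3 : ((Complex.normSq s : ℂ) * (s / (s + d)^2)).re
      = Complex.normSq s * (s / (s + (d:ℂ))^2).re := Complex.re_ofReal_mul _ _
  have e4 : (‖(s + (d:ℂ))/s‖)^2 = Complex.normSq (s + d) / Complex.normSq s := by
    rw [norm_div, div_pow, Complex.sq_norm, Complex.sq_norm]
  rw [e1, e2, e3, e4]
  have hns : 0 < Complex.normSq s := Complex.normSq_pos.2 hs0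
  have hnw : 0 < Complex.normSq (s + d) := Complex.normSq_pos.2 hw
  have hnw' : Complex.normSq (s + (d:ℂ)) = (s.re + d)^2 + s.im^2 := by
    simp [Complex.normSq_apply]; ring
  have e5 : (s / (s + (d:ℂ))^2).re
      = (s.re * ((s.re + d)^2 - s.im^2) + s.im * (2 * (s.re + d) * s.im))
        / (Complex.normSq (s + d))^2 := by
    rw [Complex.div_re]
    simp [Complex.normSq_apply, Complex.mul_re, Complex.mul_im, pow_two]
    ring_nf
  rw [e5, hnw'] at *
  set a := s.re
  set b := s.im
  set p := a + d with hp
  have h1 : 0 < p^2 + b^2 := by positivity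
  have he : 2 * (Complex.normSq s * ((a * (p ^ 2 - b ^ 2) + b * (2 * p * b)) / (p ^ 2 + b ^ 2) ^ 2)) *
      ((p ^ 2 + b ^ 2) / Complex.normSq s)
      = 2 * (a * (p ^ 2 - b ^ 2) + b * (2 * p * b)) / (p ^ 2 + b ^ 2) := by
    field_simp
  rw [he, le_div_iff₀ h1]
  nlinarith [sq_nonneg b, sq_nonneg p, mul_nonneg (mul_nonneg hd hd) (sq_nonneg b),
    mul_nonneg hd (sq_nonneg b), mul_nonneg hs.le (sq_nonneg b),
    mul_nonneg hs.le (sq_nonneg p)]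

lemma pml_re_fact (s : ℂ) (r : ℝ) (hr : r ≠ 0) (S : ℂ) :
    ((starRingEnd ℂ) s / ((r:ℂ) * S^2)).re = r⁻¹ * ((starRingEnd ℂ) s / S^2).re := by
  have : (starRingEnd ℂ) s / ((r:ℂ) * S^2) = ((r⁻¹ : ℝ) : ℂ) * ((starRingEnd ℂ) s / S^2) := by
    rw [Complex.ofReal_inv]
    rw [mul_comm ((r:ℂ)) (S^2), div_mul_eq_div_div, div_eq_inv_mul]
  rw [this, Complex.re_ofReal_mul]

/-- pointwise lower bound -/
lemma pml_pointwise_lb (s : ℂ) (hs : 0 < s.re) (d : ℝ) (hd : 0 ≤ d) (r : ℝ) (hr : 0 < r)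
    (G : ℂ) (S : ℂ) (hSdef : S = 1 + (d:ℂ)/s) :
    s.re * ((1 / r) * (‖G / S‖) ^ 2) ≤
      2 * (((starRingEnd ℂ) s / ((r:ℂ) * S^2)).re * (‖G‖)^2) := by
  have hs0 : s ≠ 0 := fun h => by simp [h] at hs
  have hS0 : S ≠ 0 := by
    rw [hSdef]
    have hmul : s * (1 + (d:ℂ)/s) = s + d := by field_simp
    intro h
    rw [h, mul_zero] at hmul
    have : (s + (d:ℂ)).re = 0 := by rw [← hmul]; simp
    simp [Complex.add_re] at this
    linarith
  have habsS : 0 < ‖S‖ := by exact norm_pos_iff.2 hS0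
  have core := pml_core s hs d hd
  rw [← hSdef] at core
  rw [pml_re_fact s r hr.ne' S]
  have h1 : ‖G / S‖ ^ 2 = (‖G‖)^2 / (‖S‖)^2 := by
    rw [norm_div, div_pow]
  rw [h1]
  have h2 : s.re / (‖S‖)^2 ≤ 2 * ((starRingEnd ℂ) s / S^2).re := by
    rw [div_le_iff₀ (by positivity)]
    linarith [core]
  have h3 : 0 ≤ (‖G‖)^2 / r := by positivity
  have := mul_le_mul_of_nonneg_right h2 h3
  calc s.re * (1 / r * ((‖G‖)^2 / (‖S‖)^2))
      = (s.re / (‖S‖)^2) * ((‖G‖)^2 / r) := by ring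
    _ ≤ (2 * ((starRingEnd ℂ) s / S^2).re) * ((‖G‖)^2 / r) := this
    _ = 2 * (r⁻¹ * ((starRingEnd ℂ) s / S^2).re * (‖G‖)^2) := by
        field_simp

/-- pointwise absolute bound -/
lemma pml_pointwise_ub (s : ℂ) (d : ℝ) (r : ℝ) (hr : 0 < r) (G : ℂ) (S : ℂ) :
    |((starRingEnd ℂ) s / ((r:ℂ) * S^2)).re * (‖G‖)^2| ≤
      ‖s‖ * ((1 / r) * (‖G / S‖) ^ 2) := by
  rw [pml_re_fact s r hr.ne' S]
  have h1 : ‖G / S‖ ^ 2 = (‖G‖)^2 / (‖S‖)^2 := by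
    rw [norm_div, div_pow]
  rw [h1, abs_mul, abs_mul]
  have h2 : |((starRingEnd ℂ) s / S^2).re| ≤ ‖s‖ / (‖S‖)^2 := by
    calc |((starRingEnd ℂ) s / S^2).re| ≤ ‖(starRingEnd ℂ) s / S^2‖ :=
          Complex.abs_re_le_norm _
      _ = ‖s‖ / (‖S‖)^2 := by
          rw [norm_div, norm_pow, Complex.norm_conj]
  have h3 : |r⁻¹| = r⁻¹ := abs_of_pos (by positivity)
  have h4 : |(‖G‖)^2| = (‖G‖)^2 := abs_of_nonneg (by positivity)
  rw [h3, h4]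
  calc r⁻¹ * |((starRingEnd ℂ) s / S^2).re| * (‖G‖)^2
      ≤ r⁻¹ * (‖s‖ / (‖S‖)^2) * (‖G‖)^2 := by
        apply mul_le_mul_of_nonneg_right _ (by positivity)
        exact mul_le_mul_of_nonneg_left h2 (by positivity)
    _ = ‖s‖ * (1 / r * ((‖G‖)^2 / (‖S‖)^2)) := by ring

/-- coercivity of the symmetrized PML sesquilinear form, Lemma 2:
for `Re s = a > 0`, PML stretching factors `S_η(x) = 1 + d_η(x_η)/s` with `d_η ≥ 0`,
a positive density `ρ`, and a vector field `g` with `(1/ρ)|g_η/S_η|²` integrable on `Ω`,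
each `Re(conj(s)/(ρ S_η²))|g_η|²` is integrable on `Ω` and
`2 Σ_η ∫_Ω Re(conj(s)/(ρ S_η²))|g_η|² ≥ a Σ_η ∫_Ω (1/ρ)|g_η/S_η|²`. -/
theorem pml_sesquilinear_coercivity (s : ℂ) (a : ℝ) (hsa : s.re = a) (ha : 0 < a)
    (Ω : Set (Fin 3 → ℝ)) (hΩ : MeasurableSet Ω)
    (ρ : (Fin 3 → ℝ) → ℝ) (hρm : Measurable ρ) (hρ : ∀ x ∈ Ω, 0 < ρ x)
    (d : Fin 3 → ℝ → ℝ) (hdm : ∀ η, Measurable (d η)) (hd : ∀ η t, 0 ≤ d η t)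
    (g : (Fin 3 → ℝ) → Fin 3 → ℂ) (hgm : Measurable g)
    (S : (Fin 3 → ℝ) → Fin 3 → ℂ) (hS : ∀ x η, S x η = 1 + (d η (x η) : ℂ) / s)
    (hint : ∀ η, IntegrableOn
      (fun x => (1 / ρ x) * (‖g x η / S x η‖) ^ 2) Ω) :
    (∀ η, IntegrableOn
      (fun x => ((starRingEnd ℂ) s / ((ρ x : ℂ) * (S x η) ^ 2)).re *
        (‖g x η‖) ^ 2) Ω) ∧
    a * ∑ η : Fin 3, ∫ x in Ω, (1 / ρ x) * (‖g x η / S x η‖) ^ 2 ≤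
      2 * ∑ η : Fin 3, ∫ x in Ω,
        ((starRingEnd ℂ) s / ((ρ x : ℂ) * (S x η) ^ 2)).re *
          (‖g x η‖) ^ 2 := by
  have hs : 0 < s.re := hsa ▸ ha
  -- measurability of S components
  have hSm : ∀ η, Measurable (fun x => S x η) := by
    intro η
    have : (fun x => S x η) = fun x => 1 + ((d η (x η) : ℝ) : ℂ) / s := by
      funext x; exact hS x η
    rw [this]
    measurability
  have hgm' : ∀ η, Measurable (fun x => g x η) := fun η =>
    (measurable_pi_apply η).comp hgm
  -- measurability of f
  have hfm : ∀ η, Measurable (fun x =>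
      ((starRingEnd ℂ) s / ((ρ x : ℂ) * (S x η) ^ 2)).re * (‖g x η‖) ^ 2) := by
    intro η
    apply Measurable.mul
    · exact Complex.measurable_re.comp
        (Measurable.div measurable_const
          ((Complex.measurable_ofReal.comp hρm).mul ((hSm η).pow measurable_const)))
    · exact (continuous_norm.measurable.comp (hgm' η)).pow measurable_const
  -- integrability
  have hintf : ∀ η, IntegrableOn
      (fun x => ((starRingEnd ℂ) s / ((ρ x : ℂ) * (S x η) ^ 2)).re *
        (‖g x η‖) ^ 2) Ω := by
    intro η
    apply Integrable.mono' ((hint η).const_mul (‖s‖))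
      ((hfm η).aestronglyMeasurable.restrict)
    refine (ae_restrict_iff' hΩ).2 (ae_of_all _ fun x hx => ?_)
    rw [Real.norm_eq_abs]
    exact pml_pointwise_ub s (d η (x η)) (ρ x) (hρ x hx) (g x η) (S x η)
  refine ⟨hintf, ?_⟩
  -- per-component inequality
  have key : ∀ η : Fin 3,
      a * ∫ x in Ω, (1 / ρ x) * (‖g x η / S x η‖) ^ 2 ≤
      2 * ∫ x in Ω, ((starRingEnd ℂ) s / ((ρ x : ℂ) * (S x η) ^ 2)).re *
        (‖g x η‖) ^ 2 := by
    intro η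
    rw [← integral_const_mul, ← integral_const_mul]
    apply setIntegral_mono_on ((hint η).const_mul a) ((hintf η).const_mul 2) hΩ
    intro x hx
    have := pml_pointwise_lb s hs (d η (x η)) (hd η (x η)) (ρ x) (hρ x hx)
      (g x η) (S x η) (hS x η)
    rw [hsa] at this
    linarith
  calc a * ∑ η : Fin 3, ∫ x in Ω, (1 / ρ x) * (‖g x η / S x η‖) ^ 2
      = ∑ η : Fin 3, a * ∫ x in Ω, (1 / ρ x) * (‖g x η / S x η‖) ^ 2 := by
        rw [Finset.mul_sum]
    _ ≤ ∑ η : Fin 3, 2 * ∫ x in Ω,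
          ((starRingEnd ℂ) s / ((ρ x : ℂ) * (S x η) ^ 2)).re *
            (‖g x η‖) ^ 2 := Finset.sum_le_sum fun η _ => key η
    _ = 2 * ∑ η : Fin 3, ∫ x in Ω,
          ((starRingEnd ℂ) s / ((ρ x : ℂ) * (S x η) ^ 2)).re *
            (‖g x η‖) ^ 2 := by rw [Finset.mul_sum]
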